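/- Under the Lazy Set axioms A0–A2, if X ⇒ Y ⇒ Z and X is a Rem event, then X < Z. -/
import Mathlib


/-- Event type: Add, Rem, or Contains. -/
inductive EType | add | rem | cnt
deriving DecidableEq

/-- Status of an event: 0, 1, or f (failed). -/
inductive Status | s0 | s1 | sf
deriving DecidableEq

open EType Status

/-- A Tarskian system execution satisfying the Lazy Set axioms A0–A2.
Events are typed Add/Rem/Cnt; Add and Rem events are actions (with
Begin(E) = End(E) = E) and the actions are linearly ordered by the temporal
precedence relation `lt`; Cnt events are high-level with Begin(E) < End(E);
`γ` is defined on the Op¹ events and satisfies axioms A1 and A2. -/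
structure LazySys where
  E : Type
  lt : E → E → Prop
  typ : E → EType
  χ : E → Status
  kval : E → ℕ
  Begin : E → E
  End' : E → E
  γ : E → E
  action : E → Prop
  lt_irrefl : ∀ e, ¬ lt e e
  lt_trans : ∀ a b c, lt a b → lt b c → lt a c
  act_lin : ∀ a b, action a → action b → a ≠ b → lt a b ∨ lt b a
  addRem_action : ∀ e, typ e ≠ EType.cnt →
    action e ∧ Begin e = e ∧ End' e = e
  begin_end_action : ∀ e, action (Begin e) ∧ action (End' e)
  cnt_interval : ∀ e, typ e = EType.cnt → lt (Begin e) (End' e)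
  lt_iff : ∀ a b, lt a b ↔ lt (End' a) (Begin b)
  A1 : ∀ A, χ A = Status.s1 →
    typ (γ A) = EType.add ∧ χ (γ A) = Status.s0 ∧ kval (γ A) = kval A ∧
    lt (γ A) (End' A) ∧
    ¬ ∃ R, typ R = EType.rem ∧ χ R = Status.s1 ∧ γ R = γ A ∧
      lt (γ A) R ∧ lt R A
  A2 : ∀ A B, typ A = EType.add → χ A = Status.s0 → χ B = Status.s0 →
    lt A B → kval A = kval B →
    ∃ R, typ R = EType.rem ∧ χ R = Status.s1 ∧ γ R = A ∧ lt R (End' B)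

/-- The auxiliary relation ⇒ used in the linearization proof. -/
def LazySys.arrow (S : LazySys) (X Y : S.E) : Prop :=
  (S.typ Y = EType.cnt ∧ S.χ Y = Status.s1 ∧ X = S.γ Y) ∨
  (S.typ X = EType.cnt ∧ S.χ X = Status.s1 ∧
    S.typ Y = EType.rem ∧ S.χ Y = Status.s1 ∧ S.γ Y = S.γ X) ∨
  (S.typ X = EType.rem ∧ S.χ X = Status.s1 ∧
    S.typ Y = EType.cnt ∧ S.χ Y = Status.s0 ∧
    S.kval X = S.kval Y ∧ ¬ S.lt Y X ∧ S.lt (S.γ X) Y) ∨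
  (S.typ X = EType.cnt ∧ S.χ X = Status.s0 ∧
    S.typ Y = EType.add ∧ S.χ Y = Status.s0 ∧
    S.kval X = S.kval Y ∧ ¬ S.lt Y X)

/-- Under the Lazy Set axioms A0–A2, if X ⇒ Y ⇒ Z and X is a
Rem event, then X < Z. -/
theorem stmt8 (S : LazySys) :
    ∀ X Y Z : S.E, S.arrow X Y → S.arrow Y Z → S.typ X = rem →
      S.lt X Z := by
  intro X Y Z hXY hYZ hX
  -- analyze arrow X Y: only the third disjunct is possible
  rcases hXY with ⟨hYc, hY1, hXg⟩ | ⟨hXc, _⟩ | ⟨_, hXs1, hYc, hY0, hkXY, hnYX, hgXY⟩ | ⟨hXc, _⟩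
  · exact absurd ((S.A1 Y hY1).1) (by rw [← hXg, hX]; simp)
  · rw [hX] at hXc; exact absurd hXc (by simp)
  · -- analyze arrow Y Z: only the fourth disjunct is possible
    rcases hYZ with ⟨hZc, hZ1, hYg⟩ | ⟨_, hY1, _⟩ | ⟨hYr, _⟩ | ⟨_, _, hZa, hZ0, hkYZ, hnZY⟩
    · exact absurd ((S.A1 Z hZ1).1) (by rw [← hYg, hYc]; simp)
    · rw [hY0] at hY1; exact absurd hY1 (by simp)
    · rw [hYc] at hYr; exact absurd hYr (by simp)
    · -- X rem¹, Y cnt⁰, Z add⁰, kval X = kval Y = kval Z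
      obtain ⟨hXact, _, hXend⟩ := S.addRem_action X (by rw [hX]; simp)
      obtain ⟨hZact, _, hZend⟩ := S.addRem_action Z (by rw [hZa]; simp)
      obtain ⟨hgAdd, hg0, hgk, _, hnoR⟩ := S.A1 X hXs1
      obtain ⟨hgact, _, _⟩ := S.addRem_action (S.γ X) (by rw [hgAdd]; simp)
      have hne : X ≠ Z := fun h => by rw [h, hZa] at hX; exact absurd hX (by simp)
      rcases S.act_lin X Z hXact hZact hne with h | h
      · exact h
      · -- suppose Z < X; derive a contradiction
        exfalso
        have hgZ : S.γ X ≠ Z := fun h => hnZY (h ▸ hgXY)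
        rcases S.act_lin (S.γ X) Z hgact hZact hgZ with hgz | hzg
        · obtain ⟨R, hRr, hR1, hRg, hRlt⟩ := S.A2 (S.γ X) Z hgAdd hg0 hZ0 hgz
            (by rw [hgk, hkXY, hkYZ])
          rw [hZend] at hRlt
          obtain ⟨_, _, _, hgR, _⟩ := S.A1 R hR1
          obtain ⟨_, _, hRend⟩ := S.addRem_action R (by rw [hRr]; simp)
          rw [hRg, hRend] at hgR
          exact hnoR ⟨R, hRr, hR1, hRg, hgR, S.lt_trans _ _ _ hRlt h⟩
        · exact hnZY (S.lt_trans _ _ _ hzg hgXY)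
  · rw [hX] at hXc; exact absurd hXc (by simp)
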